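/- Let q⋆ be an optimal k-points NN quantizer for P with codebook c⋆ = {c⋆₁,…,c⋆_k} and let q be a k-points NN quantizer with codebook c = {c₁,…,c_k}. Set m = min_{i≠j} |c⋆_i − c⋆_j| and p_min = min_{1≤j≤k} P(V_j(c⋆)). Assume P(𝔉(c⋆)) = 0, that the identity permutation attains the minimum in the definition of F₁(q⋆,q), and that F₁(q⋆,q) ≤ m/2. Then 𝐅(q⋆,q)² ≥ p_min·F₁(q⋆,q)². -/

import Mathlib

open MeasureTheory Metric Set ENNReal

noncomputable section

variable {E : Type*} [NormedAddCommGroup E] [InnerProductSpace ℝ E] [MeasurableSpace E]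

/-- A `k`-points nearest-neighbor quantizer: a Borel-measurable map whose image is a set of
exactly `k` points and which maps every point to a nearest point of its codebook. -/
def IsNNQuantizer (k : ℕ) (q : E → E) : Prop :=
  Measurable q ∧ (∃ s : Finset E, s.card = k ∧ Set.range q = ↑s) ∧
    ∀ x : E, ∀ c ∈ Set.range q, ‖x - q x‖ ≤ ‖x - c‖

/-- The risk (distortion) of a quantizer with respect to `P`. -/
def risk (P : Measure E) (q : E → E) : ℝ := ∫ x, ‖x - q x‖ ^ 2 ∂P

/-- An optimal `k`-points NN quantizer for `P`. -/
def IsOptimalQuantizer (P : Measure E) (k : ℕ) (q : E → E) : Prop :=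
  IsNNQuantizer k q ∧ ∀ q', IsNNQuantizer k q' → risk P q ≤ risk P q'

/-- The absolute margin condition with parameter `l0` (with respect to the optimal quantizer
`qs`):  (1) the set `A(l0)` has full `P`-measure; (2) for every random variable `Y`
(encoded by a coupling `π` of the law `P` of `X` and the law of `Y`) with
`E|X - Y|² ≤ l0² E|X - qs X|²`, the map `q ↦ E|Y - q Y|²` over `k`-points NN quantizers has a
unique minimizer (uniqueness of its codebook). -/
def AbsoluteMargin (P : Measure E) (k : ℕ) (qs : E → E) (l0 : ℝ) : Prop :=
  P {x | qs (x + l0 • (x - qs x)) = qs x} = 1 ∧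
  ∀ π : Measure (E × E), IsProbabilityMeasure π → π.map Prod.fst = P →
    (∫ p, ‖p.1 - p.2‖ ^ 2 ∂π) ≤ l0 ^ 2 * ∫ x, ‖x - qs x‖ ^ 2 ∂P →
    ∃ q0, IsNNQuantizer k q0 ∧
      (∀ q', IsNNQuantizer k q' → risk (π.map Prod.snd) q0 ≤ risk (π.map Prod.snd) q') ∧
      ∀ q', IsNNQuantizer k q' →
        (∀ q'', IsNNQuantizer k q'' → risk (π.map Prod.snd) q' ≤ risk (π.map Prod.snd) q'') →
        Set.range q' = Set.range q0

/-- Voronoi cell of the `j`-th point of the codebook `c`. -/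
def Vcell (k : ℕ) (c : Fin k → E) (j : Fin k) : Set E := {x | ∀ l, ‖x - c j‖ ≤ ‖x - c l‖}

/-- The frontier of the Voronoi diagram generated by `c`. -/
def VorFrontier (k : ℕ) (c : Fin k → E) : Set E :=
  ⋃ (i) (j) (_ : i ≠ j), Vcell k c i ∩ Vcell k c j

/-- `F₁` between two codebooks: min over permutations of the max distance of matched centers. -/
def F1 (k : ℕ) (c c' : Fin k → E) : ℝ :=
  ⨅ σ : Equiv.Perm (Fin k), ⨆ j, ‖c j - c' (σ j)‖

/-- `F₂` between two codebooks: the minimal `P`-mass of misclassified points. -/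
def F2 (P : Measure E) (k : ℕ) (c c' : Fin k → E) : ℝ :=
  ⨅ σ : Equiv.Perm (Fin k), (P (⋃ j, Vcell k c j ∩ Vcell k c' (σ j))ᶜ).toReal

/-- `max_{i ≠ j} ‖c i - c j‖`. -/
def maxDist (k : ℕ) (c : Fin k → E) : ℝ :=
  ⨆ p : {p : Fin k × Fin k // p.1 ≠ p.2}, ‖c p.1.1 - c p.1.2‖

/-- `min_{i ≠ j} ‖c i - c j‖`. -/
def minDist (k : ℕ) (c : Fin k → E) : ℝ :=
  ⨅ p : {p : Fin k × Fin k // p.1 ≠ p.2}, ‖c p.1.1 - c p.1.2‖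

/-- The function `p⋆(t)` of Definition `def:pstar`, for the optimal codebook `cs` of the
optimal quantizer `qs`. -/
def pstar (P : Measure E) (k : ℕ) (cs : Fin k → E) (qs : E → E) (t : ℝ) : ℝ :=
  (P (⋃ i, {x | minDist k cs * infDist x (frontier (Vcell k cs i)) ≤
      2 * ‖x - qs x‖ * t + 2 * t ^ 2})).toReal

/-- `F₁` between two quantizers, defined through enumerations of their codebooks. -/
def F1Q (k : ℕ) (q q' : E → E) : ℝ :=
  sInf {r | ∃ c c' : Fin k → E, Set.range c = Set.range q ∧ Set.range c' = Set.range q' ∧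
    r = ⨆ j, ‖c j - c' j‖}

/-- lower comparison of `𝐅²` with `F₁` via `p_min` (Subsection `sub:comp`). -/
theorem stmt9 [BorelSpace E] [CompleteSpace E] [SecondCountableTopology E]
    (P : Measure E) [IsProbabilityMeasure P] (k : ℕ) (hk : 1 ≤ k)
    (hmom : Integrable (fun x => ‖x‖ ^ 2) P)
    (hsupp : ∀ s : Finset E, s.card ≤ k → P (↑s : Set E) < 1)
    (qs q : E → E) (cs c : Fin k → E)
    (hcs_inj : Function.Injective cs) (hc_inj : Function.Injective c)
    (hcs_range : Set.range qs = Set.range cs) (hc_range : Set.range q = Set.range c)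
    (hqs : IsOptimalQuantizer P k qs) (hq : IsNNQuantizer k q)
    (hfrontS : P (VorFrontier k cs) = 0)
    (hF1id : F1 k cs c = ⨆ j, ‖cs j - c j‖)
    (hF1m : F1 k cs c ≤ minDist k cs / 2) :
    (⨅ j, (P (Vcell k cs j)).toReal) * F1 k cs c ^ 2 ≤ ∫ x, ‖q x - qs x‖ ^ 2 ∂P := by
  haveI : Nonempty (Fin k) := ⟨⟨0, hk⟩⟩
  set f : E → ℝ := fun x => ‖q x - qs x‖ ^ 2 with hf
  have hqsm : Measurable qs := hqs.1.1
  have hqm : Measurable q := hq.1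
  have hfmeas : Measurable f := ((hqm.sub hqsm).norm).pow_const 2
  have hfnn : ∀ x, 0 ≤ f x := fun x => sq_nonneg _
  -- integrability of f
  obtain ⟨C, hC⟩ : ∃ C, ∀ x, f x ≤ C := by
    have hfin : ((fun p : E × E => ‖p.1 - p.2‖ ^ 2) '' (Set.range c ×ˢ Set.range cs)).Finite :=
      ((Set.finite_range c).prod (Set.finite_range cs)).image _
    obtain ⟨C, hC⟩ := hfin.bddAbove
    refine ⟨C, fun x => hC ?_⟩
    have h1 : q x ∈ Set.range c := by rw [← hc_range]; exact Set.mem_range_self x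
    have h2 : qs x ∈ Set.range cs := by rw [← hcs_range]; exact Set.mem_range_self x
    exact ⟨(q x, qs x), ⟨h1, h2⟩, rfl⟩
  have hint : Integrable f P := by
    refine (integrable_const C).mono' hfmeas.aestronglyMeasurable (ae_of_all _ fun x => ?_)
    rw [Real.norm_eq_abs, abs_of_nonneg (hfnn x)]
    exact hC x
  -- the index attaining the sup in F1
  obtain ⟨j₀, hj₀⟩ := Finite.exists_max (fun j => ‖cs j - c j‖)
  have hbdd : BddAbove (Set.range fun j => ‖cs j - c j‖) := (Set.finite_range _).bddAbove
  have hF1eq : F1 k cs c = ‖cs j₀ - c j₀‖ := by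
    rw [hF1id]; exact le_antisymm (ciSup_le hj₀) (le_ciSup hbdd j₀)
  have hF1nn : 0 ≤ F1 k cs c := hF1eq ▸ norm_nonneg _
  have hF1le : ∀ j, ‖cs j - c j‖ ≤ F1 k cs c := fun j => hF1id ▸ le_ciSup hbdd j
  -- measurability of cells and frontier
  have hVclosed : ∀ (d : Fin k → E) j, IsClosed (Vcell k d j) := by
    intro d j
    have h : Vcell k d j = ⋂ l, {x | ‖x - d j‖ ≤ ‖x - d l‖} := by
      ext x; simp [Vcell]
    rw [h]
    exact isClosed_iInter fun l => isClosed_le (by fun_prop) (by fun_prop)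
  have hFmeas : MeasurableSet (VorFrontier k cs) :=
    MeasurableSet.iUnion fun i => MeasurableSet.iUnion fun j => MeasurableSet.iUnion fun _ =>
      ((hVclosed cs i).measurableSet.inter (hVclosed cs j).measurableSet)
  set S : Set E := Vcell k cs j₀ \ VorFrontier k cs with hSdef
  have hSmeas : MeasurableSet S := (hVclosed cs j₀).measurableSet.diff hFmeas
  -- pointwise lower bound on S
  have hpt : ∀ x ∈ S, F1 k cs c ^ 2 ≤ f x := by
    intro x hx
    obtain ⟨hxV, hxF⟩ := hx
    obtain ⟨i, hi⟩ : qs x ∈ Set.range cs := by rw [← hcs_range]; exact Set.mem_range_self x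
    have hqsx : qs x = cs j₀ := by
      by_contra hne
      have hij : i ≠ j₀ := fun h => hne (by rw [← hi, h])
      apply hxF
      have hxi : x ∈ Vcell k cs i := by
        intro l
        have h1 : ‖x - qs x‖ ≤ ‖x - cs l‖ :=
          hqs.1.2.2 x (cs l) (by rw [hcs_range]; exact Set.mem_range_self l)
        rw [← hi] at h1
        exact h1
      exact Set.mem_iUnion.2 ⟨i, Set.mem_iUnion.2 ⟨j₀, Set.mem_iUnion.2 ⟨hij, ⟨hxi, hxV⟩⟩⟩⟩
    obtain ⟨m, hm⟩ : q x ∈ Set.range c := by rw [← hc_range]; exact Set.mem_range_self x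
    have hle : F1 k cs c ≤ ‖q x - qs x‖ := by
      rw [hqsx, ← hm]
      by_cases hmj : m = j₀
      · subst hmj
        rw [hF1eq]
        exact (norm_sub_rev (cs m) (c m)).le
      · have h1 : minDist k cs ≤ ‖cs m - cs j₀‖ := by
          have hbb : BddBelow (Set.range fun p : {p : Fin k × Fin k // p.1 ≠ p.2} =>
              ‖cs p.1.1 - cs p.1.2‖) := ⟨0, by rintro r ⟨p, rfl⟩; exact norm_nonneg _⟩
          exact ciInf_le hbb ⟨(m, j₀), hmj⟩
        have h2 : ‖cs m - cs j₀‖ ≤ ‖cs m - c m‖ + ‖c m - cs j₀‖ := by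
          have h : cs m - cs j₀ = (cs m - c m) + (c m - cs j₀) := by abel
          rw [h]; exact norm_add_le _ _
        have h3 := hF1le m
        linarith [hF1m]
    calc F1 k cs c ^ 2 ≤ ‖q x - qs x‖ ^ 2 := pow_le_pow_left₀ hF1nn hle 2
      _ = f x := rfl
  have hPS : P S = P (Vcell k cs j₀) := measure_diff_null hfrontS
  calc (⨅ j, (P (Vcell k cs j)).toReal) * F1 k cs c ^ 2
      ≤ (P (Vcell k cs j₀)).toReal * F1 k cs c ^ 2 := by
        refine mul_le_mul_of_nonneg_right ?_ (sq_nonneg _)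
        exact ciInf_le ⟨0, by rintro r ⟨j, rfl⟩; exact ENNReal.toReal_nonneg⟩ j₀
    _ = ∫ _ in S, F1 k cs c ^ 2 ∂P := by
        rw [setIntegral_const, measureReal_def, hPS, smul_eq_mul]
    _ ≤ ∫ x in S, f x ∂P :=
        setIntegral_mono_on (integrable_const _) hint.integrableOn hSmeas hpt
    _ ≤ ∫ x, f x ∂P := setIntegral_le_integral hint (ae_of_all _ hfnn)
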